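/- Let ρ0 ∈ (0,1) and 0 < t1 < T. Then the series Σ_{n=1}^∞ (−1)^n n t^{ρn} (ln t − Φ(ρn+1))/Γ(ρn+1) converges uniformly (i.e., its partial sums converge uniformly) on the set of pairs (t, ρ) with t ∈ [t1, T] and ρ ∈ [ρ0, 1]. -/

import Mathlib

open Real Filter Topology

/-- The digamma function `Φ(z) = Γ'(z)/Γ(z)`. -/
noncomputable def digamma (z : ℝ) : ℝ := deriv Real.Gamma z / Real.Gamma z

lemma Gamma_diffAt {z : ℝ} (hz : 0 < z) : DifferentiableAt ℝ Real.Gamma z :=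
  Real.differentiableAt_Gamma fun m =>
    ((lt_of_le_of_lt (neg_nonpos.mpr (Nat.cast_nonneg m)) hz).ne')

lemma Gamma_monoOn : MonotoneOn Real.Gamma (Set.Ici 2) :=
  Real.Gamma_strictMonoOn_Ici.monotoneOn

lemma deriv_Gamma_nonneg {z : ℝ} (hz : 2 ≤ z) : 0 ≤ deriv Real.Gamma z := by
  have h0 : (0:ℝ) < z := by linarith
  have h1 : (0:ℝ) < z - 1 := by linarith
  have hs := Real.convexOn_Gamma.slope_le_deriv (Set.mem_Ioi.mpr h1) (Set.mem_Ioi.mpr h0)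
    (by linarith) (Gamma_diffAt h0)
  rw [slope_def_field] at hs
  have hz1 : z - (z - 1) = 1 := by ring
  rw [hz1, div_one] at hs
  have hfe : Real.Gamma z = (z - 1) * Real.Gamma (z - 1) := by
    have h := Real.Gamma_add_one (ne_of_gt h1)
    rw [sub_add_cancel] at h
    exact h
  nlinarith [Real.Gamma_pos_of_pos h1]

lemma deriv_Gamma_le {z : ℝ} (hz : 0 < z) : deriv Real.Gamma z ≤ Real.Gamma (z + 1) := by
  have hs := Real.convexOn_Gamma.deriv_le_slope (Set.mem_Ioi.mpr hz)
    (Set.mem_Ioi.mpr (by linarith : (0:ℝ) < z + 1)) (lt_add_one z) (Gamma_diffAt hz)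
  rw [slope_def_field] at hs
  have hz1 : z + 1 - z = 1 := by ring
  rw [hz1, div_one] at hs
  nlinarith [Real.Gamma_pos_of_pos hz]

lemma digamma_nonneg {z : ℝ} (hz : 2 ≤ z) : 0 ≤ digamma z :=
  div_nonneg (deriv_Gamma_nonneg hz) (Real.Gamma_pos_of_pos (by linarith)).le

lemma digamma_le {z : ℝ} (hz : 2 ≤ z) : digamma z ≤ z := by
  have h0 : (0:ℝ) < z := by linarith
  rw [digamma, div_le_iff₀ (Real.Gamma_pos_of_pos h0)]
  calc deriv Real.Gamma z ≤ Real.Gamma (z + 1) := deriv_Gamma_le h0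
    _ = z * Real.Gamma z := Real.Gamma_add_one h0.ne'

lemma key_tendsto {ρ₀ : ℝ} (h0 : 0 < ρ₀) {B : ℝ} (hB : 1 ≤ B) :
    Tendsto (fun n : ℕ => B ^ n / Real.Gamma (ρ₀ * n + 1)) atTop (𝓝 0) := by
  have hB0 : (0:ℝ) ≤ B := by linarith
  set D : ℝ := B ^ (1 / ρ₀) with hD
  have hD0 : 0 ≤ D := Real.rpow_nonneg hB0 _
  have hg : Tendsto (fun m : ℕ => D * (D ^ m / (Nat.factorial m))) atTop (𝓝 0) := by
    simpa using (FloorSemiring.tendsto_pow_div_factorial_atTop D).const_mul D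
  have hcast : Tendsto (fun n : ℕ => ρ₀ * n) atTop atTop :=
    Tendsto.const_mul_atTop h0 tendsto_natCast_atTop_atTop
  have hfloor : Tendsto (fun n : ℕ => ⌊ρ₀ * n⌋₊) atTop atTop :=
    tendsto_nat_floor_atTop.comp hcast
  refine tendsto_of_tendsto_of_tendsto_of_le_of_le' tendsto_const_nhds (hg.comp hfloor) ?_ ?_
  · filter_upwards with n
    have hnn : (0:ℝ) ≤ ρ₀ * n := mul_nonneg h0.le (Nat.cast_nonneg n)
    have h1 : (0:ℝ) < ρ₀ * n + 1 := by linarith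
    have := Real.Gamma_pos_of_pos h1
    positivity
  · filter_upwards [hcast.eventually_ge_atTop 1] with n hn
    set m : ℕ := ⌊ρ₀ * n⌋₊ with hm
    have hm1 : 1 ≤ m := Nat.le_floor (by exact_mod_cast hn)
    have hmle : (m : ℝ) ≤ ρ₀ * n := Nat.floor_le (mul_nonneg h0.le (Nat.cast_nonneg n))
    have hlt : ρ₀ * n < m + 1 := Nat.lt_floor_add_one _
    have hΓ : ((Nat.factorial m) : ℝ) ≤ Real.Gamma (ρ₀ * n + 1) := by
      have h2 : ((m : ℝ) + 1) ∈ Set.Ici (2:ℝ) := by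
        simp only [Set.mem_Ici]
        have : (1:ℝ) ≤ (m:ℝ) := by exact_mod_cast hm1
        linarith
      have h3 : (ρ₀ * n + 1) ∈ Set.Ici (2:ℝ) := by
        simp only [Set.mem_Ici]; linarith
      have h4 := Gamma_monoOn h2 h3 (by linarith)
      rwa [Real.Gamma_nat_eq_factorial] at h4
    have hnum : B ^ n ≤ D * D ^ m := by
      have e1 : (B:ℝ) ^ n = B ^ ((n : ℝ)) := (Real.rpow_natCast B n).symm
      have e2 : D * D ^ m = D ^ (m + 1) := by rw [pow_succ]; ring
      have e3 : D ^ (m + 1) = B ^ ((1 / ρ₀) * ((m:ℝ) + 1)) := by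
        rw [hD, ← Real.rpow_natCast (B ^ (1/ρ₀)) (m+1), ← Real.rpow_mul hB0]
        push_cast
        ring_nf
      rw [e1, e2, e3]
      apply Real.rpow_le_rpow_of_exponent_le hB
      rw [div_mul_eq_mul_div, one_mul, le_div_iff₀ h0, mul_comm]
      linarith
    have hfacpos : (0:ℝ) < ((Nat.factorial m) : ℝ) := by exact_mod_cast Nat.factorial_pos m
    calc B ^ n / Real.Gamma (ρ₀ * n + 1) ≤ (D * D ^ m) / ((Nat.factorial m)) :=
          div_le_div₀ (by positivity) hnum hfacpos hΓ
      _ = D * (D ^ m / (Nat.factorial m)) := by ring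

theorem series_uniform_convergence (ρ₀ t₁ T : ℝ) (hρ₀ : ρ₀ ∈ Set.Ioo (0:ℝ) 1)
    (ht₁ : 0 < t₁) (ht₁T : t₁ < T) :
    ∃ g : ℝ × ℝ → ℝ,
      TendstoUniformlyOn
        (fun N : ℕ => fun p : ℝ × ℝ =>
          ∑ n ∈ Finset.Icc 1 N,
            (-1 : ℝ) ^ n * n * p.1 ^ (p.2 * n) *
              (Real.log p.1 - digamma (p.2 * n + 1)) / Real.Gamma (p.2 * n + 1))
        g Filter.atTop (Set.Icc t₁ T ×ˢ Set.Icc ρ₀ 1) := by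
  obtain ⟨hρ₀0, hρ₀1⟩ := hρ₀
  have hT : 0 < T := ht₁.trans ht₁T
  set s : Set (ℝ × ℝ) := Set.Icc t₁ T ×ˢ Set.Icc ρ₀ 1 with hs
  set f : ℕ → ℝ × ℝ → ℝ := fun n p =>
    (-1 : ℝ) ^ n * n * p.1 ^ (p.2 * n) *
      (Real.log p.1 - digamma (p.2 * n + 1)) / Real.Gamma (p.2 * n + 1) with hf
  set L : ℝ := max |Real.log t₁| |Real.log T| with hL
  set Mb : ℝ := max 1 T with hMb
  have hMb1 : (1:ℝ) ≤ Mb := le_max_left _ _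
  have hL0 : (0:ℝ) ≤ L := le_trans (abs_nonneg _) (le_max_left _ _)
  set A : ℝ := 4 * (L + 1) * Mb with hA
  have hA1 : (1:ℝ) ≤ A := by nlinarith
  have hA0 : (0:ℝ) < A := by linarith
  have hcast : Tendsto (fun n : ℕ => ρ₀ * n) atTop atTop :=
    Tendsto.const_mul_atTop hρ₀0 tendsto_natCast_atTop_atTop
  have h2A : ∀ᶠ n : ℕ in atTop, (2 * A) ^ n / Real.Gamma (ρ₀ * n + 1) ≤ 1 := by
    filter_upwards [(key_tendsto hρ₀0 (by linarith : (1:ℝ) ≤ 2 * A)).eventually_lt_const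
      one_pos] with n h
    exact h.le
  have hev : ∀ᶠ n : ℕ in atTop, ∀ p ∈ s, ‖f n p‖ ≤ (1/2 : ℝ) ^ n := by
    filter_upwards [hcast.eventually_ge_atTop 1, h2A, eventually_ge_atTop 1]
      with n hρn h2n hn1
    rintro ⟨t, ρ⟩ ⟨⟨htl, htu⟩, hρl, hρu⟩
    have ht0 : (0:ℝ) < t := ht₁.trans_le htl
    have hρρ₀ : ρ₀ * n ≤ ρ * n := mul_le_mul_of_nonneg_right hρl (Nat.cast_nonneg n)
    have hz2 : (2:ℝ) ≤ ρ * n + 1 := by linarith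
    have hΓpos : (0:ℝ) < Real.Gamma (ρ * n + 1) := Real.Gamma_pos_of_pos (by linarith)
    have hΓ₀pos : (0:ℝ) < Real.Gamma (ρ₀ * n + 1) := Real.Gamma_pos_of_pos (by linarith)
    have hΓmono : Real.Gamma (ρ₀ * n + 1) ≤ Real.Gamma (ρ * n + 1) :=
      Gamma_monoOn (by simp only [Set.mem_Ici]; linarith) (by simp only [Set.mem_Ici]; linarith)
        (by linarith)
    have htpow : t ^ (ρ * n) ≤ Mb ^ n := by
      calc t ^ (ρ * n) ≤ Mb ^ (ρ * n) :=
            Real.rpow_le_rpow ht0.le (le_trans htu (le_max_right _ _)) (by linarith)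
        _ ≤ Mb ^ ((n : ℝ)) := by
            apply Real.rpow_le_rpow_of_exponent_le hMb1
            nlinarith [Nat.cast_nonneg (α := ℝ) n]
        _ = Mb ^ n := Real.rpow_natCast Mb n
    have htpow0 : (0:ℝ) ≤ t ^ (ρ * n) := Real.rpow_nonneg ht0.le _
    have hlog : |Real.log t| ≤ L := by
      rw [abs_le]
      constructor
      · have h1 : Real.log t₁ ≤ Real.log t := Real.log_le_log ht₁ htl
        have h2 : -|Real.log t₁| ≤ Real.log t₁ := neg_abs_le _
        have h3 : |Real.log t₁| ≤ L := le_max_left _ _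
        linarith
      · have h1 : Real.log t ≤ Real.log T := Real.log_le_log ht0 htu
        have h2 : Real.log T ≤ |Real.log T| := le_abs_self _
        have h3 : |Real.log T| ≤ L := le_max_right _ _
        linarith
    have hdig : |Real.log t - digamma (ρ * n + 1)| ≤ L + ((n:ℝ) + 1) := by
      have h1 : 0 ≤ digamma (ρ * n + 1) := digamma_nonneg hz2
      have h2 : digamma (ρ * n + 1) ≤ ρ * n + 1 := digamma_le hz2
      have h3 : ρ * n + 1 ≤ (n:ℝ) + 1 := by nlinarith [Nat.cast_nonneg (α := ℝ) n]
      have h4 := abs_le.mp hlog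
      rw [abs_le]
      constructor <;> [linarith; linarith]
    have hn2 : (n:ℝ) ≤ 2 ^ n := by exact_mod_cast (Nat.lt_two_pow_self (n := n)).le
    have hn12 : (n:ℝ) + 1 ≤ 2 ^ n := by
      have : n + 1 ≤ 2 ^ n := Nat.lt_two_pow_self (n := n)
      exact_mod_cast this
    have hstep2 : (n:ℝ) * Mb ^ n * (L + ((n:ℝ) + 1)) ≤ A ^ n := by
      have hc : L + ((n:ℝ) + 1) ≤ (L + 1) * 2 ^ n := by
        have hL2 : L ≤ L * 2 ^ n :=
          le_mul_of_one_le_right hL0 (one_le_pow₀ (by norm_num))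
        nlinarith
      have h4 : (4:ℝ) ^ n = 2 ^ n * 2 ^ n := by
        rw [show (4:ℝ) = 2 * 2 by norm_num, mul_pow]
      calc (n:ℝ) * Mb ^ n * (L + ((n:ℝ) + 1)) ≤ 2 ^ n * Mb ^ n * ((L + 1) * 2 ^ n) := by
            apply mul_le_mul (mul_le_mul_of_nonneg_right hn2 (by positivity)) hc
              (by positivity) (by positivity)
        _ = (L + 1) * (2 ^ n * 2 ^ n * Mb ^ n) := by ring
        _ ≤ (L + 1) ^ n * (2 ^ n * 2 ^ n * Mb ^ n) := by
            apply mul_le_mul_of_nonneg_right (le_self_pow₀ (by linarith) (by omega))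
              (by positivity)
        _ = A ^ n := by rw [hA, mul_pow, mul_pow, h4]; ring
    have hΓge : (2 * A) ^ n ≤ Real.Gamma (ρ₀ * n + 1) := (div_le_one hΓ₀pos).mp h2n
    have hhalf : A ^ n / (2 * A) ^ n = (1/2 : ℝ) ^ n := by
      rw [← div_pow]
      congr 1
      field_simp
    rw [hf]
    simp only [Real.norm_eq_abs, abs_div, abs_mul, abs_pow, abs_neg, abs_one, one_pow, one_mul,
      Nat.abs_cast, abs_of_nonneg htpow0, abs_of_pos hΓpos]
    calc (n:ℝ) * t ^ (ρ * (n:ℝ)) * |Real.log t - digamma (ρ * n + 1)| / Real.Gamma (ρ * n + 1)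
        ≤ (n:ℝ) * Mb ^ n * (L + ((n:ℝ) + 1)) / Real.Gamma (ρ₀ * n + 1) := by
          apply div_le_div₀ (by positivity) ?_ hΓ₀pos hΓmono
          apply mul_le_mul (mul_le_mul_of_nonneg_left htpow (Nat.cast_nonneg n)) hdig
            (abs_nonneg _) (by positivity)
      _ ≤ A ^ n / Real.Gamma (ρ₀ * n + 1) := (div_le_div_iff_of_pos_right hΓ₀pos).mpr hstep2
      _ ≤ A ^ n / (2 * A) ^ n := by
          apply div_le_div_of_nonneg_left (by positivity) (by positivity) hΓge
      _ = (1/2 : ℝ) ^ n := hhalf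
  have hu : Summable (fun n : ℕ => (1/2 : ℝ) ^ n) :=
    summable_geometric_of_lt_one (by norm_num) (by norm_num)
  have H := tendstoUniformlyOn_tsum_of_cofinite_eventually hu (Nat.cofinite_eq_atTop ▸ hev)
  refine ⟨fun p => ∑' n, f n p, ?_⟩
  have H2 : TendstoUniformlyOn (fun N : ℕ => fun p => ∑ n ∈ Finset.range (N+1), f n p)
      (fun p => ∑' n, f n p) atTop s :=
    fun v hv => (tendsto_finset_range.comp (tendsto_add_atTop_nat 1)).eventually (H v hv)
  apply H2.congr
  filter_upwards with N p _
  symm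
  apply Finset.sum_subset
  · intro x hx
    rw [Finset.mem_Icc] at hx
    rw [Finset.mem_range]
    omega
  · intro x hx hnx
    rw [Finset.mem_range] at hx
    rw [Finset.mem_Icc] at hnx
    have hx0 : x = 0 := by omega
    subst hx0
    simp [hf]
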